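/- Let p_i, p_j, p_k, p_h, p_l ∈ ℝ³ with p_j, p_k, p_h, p_l each distinct from p_i, and suppose p_l is not collinear with {p_i, p_j}, not collinear with {p_i, p_k}, and not collinear with {p_i, p_h}. Let μ̄_ij, μ̄_ik, μ̄_ih, μ̄_il ∈ ℝ satisfy the bearing constraint μ̄_ij·g_ij + μ̄_ik·g_ik + μ̄_ih·g_ih + μ̄_il·g_il = 0, where g_im = (p_m − p_i)/dist(p_i, p_m). Define μ_ij = μ̄_ij·sin∠(p_i, p_j, p_l)/sin∠(p_i, p_l, p_j), μ_ik = μ̄_ik·sin∠(p_i, p_k, p_l)/sin∠(p_i, p_l, p_k), μ_ih = μ̄_ih·sin∠(p_i, p_h, p_l)/sin∠(p_i, p_l, p_h), and μ_il = μ̄_il. Then μ_ij·(p_j − p_i) + μ_ik·(p_k − p_i) + μ_ih·(p_h − p_i) + μ_il·(p_l − p_i) = 0. -/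

import Mathlib

open EuclideanGeometry

lemma sin_mul_dist_eq (a b c : EuclideanSpace ℝ (Fin 3)) :
    Real.sin (∠ a b c) * (dist a b * dist c b) =
      Real.sin (∠ a c b) * (dist a c * dist b c) := by
  have h1 : ∠ a b c = InnerProductGeometry.angle (a - b) (c - b) := rfl
  have h2 : ∠ a c b = InnerProductGeometry.angle ((a - b) - (c - b)) (-(c - b)) := by
    have : (a - b) - (c - b) = a - c := by abel
    rw [this]
    have : -(c - b) = b - c := by abel
    rw [this]; rfl
  rw [h1, h2]
  have da : dist a b = ‖a - b‖ := by rw [dist_eq_norm]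
  have db : dist c b = ‖c - b‖ := by rw [dist_eq_norm]
  have dc : dist a c = ‖(a - b) - (c - b)‖ := by rw [dist_eq_norm]; congr 1; abel
  have dd : dist b c = ‖-(c - b)‖ := by rw [dist_eq_norm]; congr 1; abel
  rw [da, db, dc, dd, InnerProductGeometry.sin_angle_mul_norm_mul_norm,
    InnerProductGeometry.sin_angle_mul_norm_mul_norm]
  congr 1
  set x := a - b
  set y := c - b
  simp only [inner_sub_sub_self, inner_sub_left, inner_sub_right, inner_neg_neg,
    inner_neg_left, inner_neg_right, real_inner_comm x y]
  ring

lemma sin_div_sin (a b c : EuclideanSpace ℝ (Fin 3)) (hb : b ≠ a)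
    (h : ¬ Collinear ℝ ({a, b, c} : Set (EuclideanSpace ℝ (Fin 3)))) :
    Real.sin (∠ a b c) / Real.sin (∠ a c b) = dist a c / dist a b := by
  have hbc : b ≠ c := by
    rintro rfl
    exact h (Collinear.subset (by intro x hx; simp at hx; rcases hx with h|h|h <;> simp [h])
      (collinear_pair ℝ a b))
  have hsin : Real.sin (∠ a c b) ≠ 0 := by
    have : ¬ Collinear ℝ ({a, c, b} : Set (EuclideanSpace ℝ (Fin 3))) := by
      intro hc; apply h
      have : ({a, b, c} : Set (EuclideanSpace ℝ (Fin 3))) = {a, c, b} := by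
        ext x; simp; tauto
      rw [this]; exact hc
    exact EuclideanGeometry.sin_ne_zero_of_not_collinear this
  have hab : dist a b ≠ 0 := by simpa [dist_ne_zero] using hb.symm
  have hcb : dist c b ≠ 0 := by simpa [dist_ne_zero] using hbc.symm
  have key := sin_mul_dist_eq a b c
  rw [dist_comm b c] at key
  field_simp
  apply mul_right_cancel₀ hcb
  linear_combination key

theorem stmt_17 (p_i p_j p_k p_h p_l : EuclideanSpace ℝ (Fin 3))
    (hj : p_j ≠ p_i) (hk : p_k ≠ p_i) (hh : p_h ≠ p_i) (hl : p_l ≠ p_i)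
    (hlj : ¬ Collinear ℝ ({p_i, p_j, p_l} : Set (EuclideanSpace ℝ (Fin 3))))
    (hlk : ¬ Collinear ℝ ({p_i, p_k, p_l} : Set (EuclideanSpace ℝ (Fin 3))))
    (hlh : ¬ Collinear ℝ ({p_i, p_h, p_l} : Set (EuclideanSpace ℝ (Fin 3))))
    (μb_ij μb_ik μb_ih μb_il : ℝ)
    (hbear : μb_ij • ((dist p_i p_j)⁻¹ • (p_j - p_i))
        + μb_ik • ((dist p_i p_k)⁻¹ • (p_k - p_i))
        + μb_ih • ((dist p_i p_h)⁻¹ • (p_h - p_i))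
        + μb_il • ((dist p_i p_l)⁻¹ • (p_l - p_i)) = 0) :
    (μb_ij * (Real.sin (∠ p_i p_j p_l) / Real.sin (∠ p_i p_l p_j))) • (p_j - p_i)
      + (μb_ik * (Real.sin (∠ p_i p_k p_l) / Real.sin (∠ p_i p_l p_k))) • (p_k - p_i)
      + (μb_ih * (Real.sin (∠ p_i p_h p_l) / Real.sin (∠ p_i p_l p_h))) • (p_h - p_i)
      + μb_il • (p_l - p_i) = 0 := by
  have hdl : dist p_i p_l ≠ 0 := by simpa [dist_ne_zero] using hl.symm
  rw [sin_div_sin p_i p_j p_l hj hlj, sin_div_sin p_i p_k p_l hk hlk,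
      sin_div_sin p_i p_h p_l hh hlh]
  have := congrArg (fun v => (dist p_i p_l) • v) hbear
  simp only [smul_add, smul_smul, smul_zero] at this
  rw [← this]
  have hj' : dist p_i p_j ≠ 0 := by simpa [dist_ne_zero] using hj.symm
  have hk' : dist p_i p_k ≠ 0 := by simpa [dist_ne_zero] using hk.symm
  have hh' : dist p_i p_h ≠ 0 := by simpa [dist_ne_zero] using hh.symm
  congr 1
  · congr 1
    · congr 1
      · congr 1; field_simp
      · congr 1; field_simp
    · congr 1; field_simp
  · congr 1; field_simp
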